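/- Let M = U ×_f V be a warped product whose metric g is super generalized recurrent (SGK_n) with associated 1-forms (Π, Φ, Ψ, Θ). Then at every point x ∈ M at which the 1-form (df + f Π̄) is nonzero (i.e. f_e + f Π_e ≠ 0 at x for some e ∈ {1,…,p}), the fiber metric g̃ is of Roter type RT_{n−p} with (R̃; g̃, S̃): there exist real numbers N₁, N₂, N₃ such that R̃_{αβγδ} = N₁ (g̃∧g̃)_{αβγδ} − N₂ (g̃∧S̃)_{αβγδ} − N₃ (S̃∧S̃)_{αβγδ} at x for all indices α,β,γ,δ. -/

import Mathlib

noncomputable section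

/-- Partial derivative of a scalar function along the `j`-th coordinate direction. -/
def pd {k : ℕ} (F : (Fin k → ℝ) → ℝ) (j : Fin k) (x : Fin k → ℝ) : ℝ :=
  fderiv ℝ F x (Pi.single j 1)

/-- Christoffel symbols `Γ^i_{jl}` of a metric `h` with (pointwise) inverse `hinv`. -/
def Christoffel {k : ℕ} (h hinv : (Fin k → ℝ) → Fin k → Fin k → ℝ)
    (i j l : Fin k) (x : Fin k → ℝ) : ℝ :=
  (1 / 2) * ∑ r, hinv x i r *
    (pd (fun y => h y r l) j x + pd (fun y => h y j r) l x - pd (fun y => h y j l) r x)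

/-- The (0,4) Riemann-Christoffel curvature tensor of `h`. -/
def Riem {k : ℕ} (h hinv : (Fin k → ℝ) → Fin k → Fin k → ℝ)
    (x : Fin k → ℝ) (i j s l : Fin k) : ℝ :=
  ∑ r, h x i r *
    (pd (Christoffel h hinv r l j) s x - pd (Christoffel h hinv r s j) l x
      + (∑ t, Christoffel h hinv r s t x * Christoffel h hinv t l j x)
      - ∑ t, Christoffel h hinv r l t x * Christoffel h hinv t s j x)

/-- The Ricci tensor of `h`. -/
def Ric {k : ℕ} (h hinv : (Fin k → ℝ) → Fin k → Fin k → ℝ)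
    (x : Fin k → ℝ) (j l : Fin k) : ℝ :=
  ∑ i, ∑ s, hinv x i s * Riem h hinv x i j s l

/-- The scalar curvature of `h`. -/
def Scal {k : ℕ} (h hinv : (Fin k → ℝ) → Fin k → Fin k → ℝ) (x : Fin k → ℝ) : ℝ :=
  ∑ j, ∑ l, hinv x j l * Ric h hinv x j l

/-- Covariant derivative (w.r.t. the Levi-Civita connection of `h`) of a (0,4) tensor field. -/
def cov4 {k : ℕ} (h hinv : (Fin k → ℝ) → Fin k → Fin k → ℝ)
    (T : (Fin k → ℝ) → Fin k → Fin k → Fin k → Fin k → ℝ)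
    (x : Fin k → ℝ) (i j s l m : Fin k) : ℝ :=
  pd (fun y => T y i j s l) m x
    - (∑ r, Christoffel h hinv r m i x * T x r j s l)
    - (∑ r, Christoffel h hinv r m j x * T x i r s l)
    - (∑ r, Christoffel h hinv r m s x * T x i j r l)
    - ∑ r, Christoffel h hinv r m l x * T x i j s r

/-- Covariant derivative of a (0,2) tensor field. -/
def cov2 {k : ℕ} (h hinv : (Fin k → ℝ) → Fin k → Fin k → ℝ)
    (T : (Fin k → ℝ) → Fin k → Fin k → ℝ) (x : Fin k → ℝ) (i j m : Fin k) : ℝ :=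
  pd (fun y => T y i j) m x
    - (∑ r, Christoffel h hinv r m i x * T x r j)
    - ∑ r, Christoffel h hinv r m j x * T x i r

/-- Kulkarni-Nomizu product of two (0,2) tensors. -/
def KN {k : ℕ} (A E : (Fin k → ℝ) → Fin k → Fin k → ℝ)
    (x : Fin k → ℝ) (i j s l : Fin k) : ℝ :=
  A x i l * E x j s + A x j s * E x i l - A x i s * E x j l - A x j l * E x i s

/-- The Gaussian curvature tensor `G_{ijsl} = h_{il}h_{js} - h_{is}h_{jl}`. -/
def Gt {k : ℕ} (h : (Fin k → ℝ) → Fin k → Fin k → ℝ)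
    (x : Fin k → ℝ) (i j s l : Fin k) : ℝ :=
  h x i l * h x j s - h x i s * h x j l

/-- The conformal (Weyl) curvature tensor of a `k`-dimensional metric `h`. -/
def Weyl {k : ℕ} (h hinv : (Fin k → ℝ) → Fin k → Fin k → ℝ)
    (x : Fin k → ℝ) (i j s l : Fin k) : ℝ :=
  Riem h hinv x i j s l - (1 / ((k : ℝ) - 2)) * KN h (Ric h hinv) x i j s l
    + (Scal h hinv x / (2 * ((k : ℝ) - 1) * ((k : ℝ) - 2))) * KN h h x i j s l

/-- Recurrency condition at a point. -/
def Recur {k : ℕ} (h hinv : (Fin k → ℝ) → Fin k → Fin k → ℝ)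
    (piF : (Fin k → ℝ) → Fin k → ℝ) (x : Fin k → ℝ) : Prop :=
  ∀ i j s l m, cov4 h hinv (Riem h hinv) x i j s l m = piF x m * Riem h hinv x i j s l

/-- Hyper generalized recurrency condition at a point. -/
def HGK {k : ℕ} (h hinv : (Fin k → ℝ) → Fin k → Fin k → ℝ)
    (piF psiF : (Fin k → ℝ) → Fin k → ℝ) (x : Fin k → ℝ) : Prop :=
  ∀ i j s l m, cov4 h hinv (Riem h hinv) x i j s l m =
    piF x m * Riem h hinv x i j s l + psiF x m * KN h (Ric h hinv) x i j s l

/-- Weakly generalized recurrency condition at a point. -/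
def WGK {k : ℕ} (h hinv : (Fin k → ℝ) → Fin k → Fin k → ℝ)
    (piF phiF : (Fin k → ℝ) → Fin k → ℝ) (x : Fin k → ℝ) : Prop :=
  ∀ i j s l m, cov4 h hinv (Riem h hinv) x i j s l m =
    piF x m * Riem h hinv x i j s l
      + phiF x m * KN (Ric h hinv) (Ric h hinv) x i j s l

/-- Super generalized recurrency condition at a point. -/
def SGK {k : ℕ} (h hinv : (Fin k → ℝ) → Fin k → Fin k → ℝ)
    (piF phiF psiF thetaF : (Fin k → ℝ) → Fin k → ℝ) (x : Fin k → ℝ) : Prop :=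
  ∀ i j s l m, cov4 h hinv (Riem h hinv) x i j s l m =
    piF x m * Riem h hinv x i j s l
      + phiF x m * KN (Ric h hinv) (Ric h hinv) x i j s l
      + psiF x m * KN h (Ric h hinv) x i j s l
      + thetaF x m * KN h h x i j s l

/-- Base-point projection of a point of `M = U × V`. -/
def bpt {p q : ℕ} (z : Fin (p + q) → ℝ) : Fin p → ℝ := fun a => z (Fin.castAdd q a)

/-- Fiber-point projection of a point of `M = U × V`. -/
def fpt {p q : ℕ} (z : Fin (p + q) → ℝ) : Fin q → ℝ := fun a => z (Fin.natAdd p a)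

/-- Block-diagonal combination of a base tensor `A` and a fiber tensor `B` scaled by `c`. -/
def wPair {p q : ℕ} (A : (Fin p → ℝ) → Fin p → Fin p → ℝ)
    (B : (Fin q → ℝ) → Fin q → Fin q → ℝ) (c : (Fin p → ℝ) → ℝ)
    (z : Fin (p + q) → ℝ) (i j : Fin (p + q)) : ℝ :=
  Sum.elim
    (fun a => Sum.elim (fun b => A (bpt z) a b) (fun _ => (0 : ℝ)) (finSumFinEquiv.symm j))
    (fun a => Sum.elim (fun _ => (0 : ℝ)) (fun b => c (bpt z) * B (fpt z) a b)
      (finSumFinEquiv.symm j))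
    (finSumFinEquiv.symm i)

/-- The warped product metric `g = ḡ ⊕ f g̃`. -/
def wMet {p q : ℕ} (gbar : (Fin p → ℝ) → Fin p → Fin p → ℝ)
    (gtil : (Fin q → ℝ) → Fin q → Fin q → ℝ) (f : (Fin p → ℝ) → ℝ) :
    (Fin (p + q) → ℝ) → Fin (p + q) → Fin (p + q) → ℝ :=
  wPair gbar gtil f

/-- The inverse of the warped product metric. -/
def wMetInv {p q : ℕ} (gbinv : (Fin p → ℝ) → Fin p → Fin p → ℝ)
    (gtinv : (Fin q → ℝ) → Fin q → Fin q → ℝ) (f : (Fin p → ℝ) → ℝ) :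
    (Fin (p + q) → ℝ) → Fin (p + q) → Fin (p + q) → ℝ :=
  wPair gbinv gtinv fun x => (f x)⁻¹

/-- The set of points of `M = U × V` inside `ℝ^{p+q}`. -/
def Mset {p q : ℕ} (U : Set (Fin p → ℝ)) (V : Set (Fin q → ℝ)) : Set (Fin (p + q) → ℝ) :=
  {z | bpt z ∈ U ∧ fpt z ∈ V}

/-- The tensor `T_{ab} = -(1/(2f))(f_{a,b} - (1/(2f)) f_a f_b)`. -/
def Tten {p : ℕ} (gbar gbinv : (Fin p → ℝ) → Fin p → Fin p → ℝ) (f : (Fin p → ℝ) → ℝ)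
    (x : Fin p → ℝ) (a b : Fin p) : ℝ :=
  -(1 / (2 * f x)) *
    ((pd (fun y => pd f a y) b x - ∑ c, Christoffel gbar gbinv c b a x * pd f c x)
      - (1 / (2 * f x)) * pd f a x * pd f b x)

/-- `tr T = ḡ^{ab} T_{ab}`. -/
def trT {p : ℕ} (gbar gbinv : (Fin p → ℝ) → Fin p → Fin p → ℝ) (f : (Fin p → ℝ) → ℝ)
    (x : Fin p → ℝ) : ℝ :=
  ∑ a, ∑ b, gbinv x a b * Tten gbar gbinv f x a b

/-- `P = (1/(4f²)) ḡ^{ab} f_a f_b`. -/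
def Pw {p : ℕ} (gbinv : (Fin p → ℝ) → Fin p → Fin p → ℝ) (f : (Fin p → ℝ) → ℝ)
    (x : Fin p → ℝ) : ℝ :=
  (1 / (4 * f x ^ 2)) * ∑ a, ∑ b, gbinv x a b * pd f a x * pd f b x

/-- `Q = f((n-p-1)P - tr T)`, with `n - p = q`. -/
def Qw {p : ℕ} (q : ℕ) (gbar gbinv : (Fin p → ℝ) → Fin p → Fin p → ℝ)
    (f : (Fin p → ℝ) → ℝ) (x : Fin p → ℝ) : ℝ :=
  f x * (((q : ℝ) - 1) * Pw gbinv f x - trT gbar gbinv f x)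

/-! ### Infrastructure -/

open Filter Topology

section Infra

variable {p q k : ℕ}

/-- `bpt` as a continuous linear map. -/
def bptL (p q : ℕ) : (Fin (p + q) → ℝ) →L[ℝ] (Fin p → ℝ) :=
  ContinuousLinearMap.pi fun a => ContinuousLinearMap.proj (Fin.castAdd q a)

/-- `fpt` as a continuous linear map. -/
def fptL (p q : ℕ) : (Fin (p + q) → ℝ) →L[ℝ] (Fin q → ℝ) :=
  ContinuousLinearMap.pi fun a => ContinuousLinearMap.proj (Fin.natAdd p a)

lemma bptL_apply (z : Fin (p + q) → ℝ) : bptL p q z = bpt z := rfl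
lemma fptL_apply (z : Fin (p + q) → ℝ) : fptL p q z = fpt z := rfl

lemma bpt_single_ca (e : Fin p) :
    bpt (Pi.single (Fin.castAdd q e) (1 : ℝ)) = Pi.single e 1 := by
  funext a
  simp [bpt, Pi.single_apply, Fin.castAdd_inj, eq_comm]

lemma fpt_single_ca (e : Fin p) :
    fpt (Pi.single (Fin.castAdd q e) (1 : ℝ)) = (0 : Fin q → ℝ) := by
  funext a
  have : Fin.natAdd p a ≠ Fin.castAdd q e := by
    simp [Fin.ext_iff]; omega
  simp [fpt, Pi.single_apply, this]

lemma bpt_single_na (ε : Fin q) :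
    bpt (Pi.single (Fin.natAdd p ε) (1 : ℝ)) = (0 : Fin p → ℝ) := by
  funext a
  have : Fin.castAdd q a ≠ Fin.natAdd p ε := by
    simp [Fin.ext_iff]; omega
  simp [bpt, Pi.single_apply, this]

lemma fpt_single_na (ε : Fin q) :
    fpt (Pi.single (Fin.natAdd p ε) (1 : ℝ)) = Pi.single ε 1 := by
  funext a
  simp [fpt, Pi.single_apply, Fin.ext_iff, eq_comm]

lemma isOpen_Mset {U : Set (Fin p → ℝ)} {V : Set (Fin q → ℝ)}
    (hU : IsOpen U) (hV : IsOpen V) : IsOpen (Mset U V) := by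
  have : Mset U V = bpt ⁻¹' U ∩ fpt ⁻¹' V := rfl
  rw [this]
  exact ((hU.preimage (bptL p q).continuous)).inter (hV.preimage (fptL p q).continuous)

lemma diffAt_comp_bpt {F : (Fin p → ℝ) → ℝ} {z : Fin (p + q) → ℝ}
    (hF : DifferentiableAt ℝ F (bpt z)) :
    DifferentiableAt ℝ (fun y => F (bpt y)) z :=
  hF.comp z (bptL p q).differentiableAt

lemma diffAt_comp_fpt {F : (Fin q → ℝ) → ℝ} {z : Fin (p + q) → ℝ}
    (hF : DifferentiableAt ℝ F (fpt z)) :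
    DifferentiableAt ℝ (fun y => F (fpt y)) z :=
  hF.comp z (fptL p q).differentiableAt

lemma pd_comp_bpt {F : (Fin p → ℝ) → ℝ} {z : Fin (p + q) → ℝ}
    (hF : DifferentiableAt ℝ F (bpt z)) (j : Fin (p + q)) :
    pd (fun y => F (bpt y)) j z = fderiv ℝ F (bpt z) (bpt (Pi.single j 1)) := by
  have h : (fun y => F (bpt y)) = F ∘ (bptL p q) := rfl
  have hF' : DifferentiableAt ℝ F ((bptL p q) z) := hF
  rw [pd, h, fderiv_comp z hF' (bptL p q).differentiableAt]
  simp [ContinuousLinearMap.fderiv, bptL_apply]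

lemma pd_comp_fpt {F : (Fin q → ℝ) → ℝ} {z : Fin (p + q) → ℝ}
    (hF : DifferentiableAt ℝ F (fpt z)) (j : Fin (p + q)) :
    pd (fun y => F (fpt y)) j z = fderiv ℝ F (fpt z) (fpt (Pi.single j 1)) := by
  have h : (fun y => F (fpt y)) = F ∘ (fptL p q) := rfl
  have hF' : DifferentiableAt ℝ F ((fptL p q) z) := hF
  rw [pd, h, fderiv_comp z hF' (fptL p q).differentiableAt]
  simp [ContinuousLinearMap.fderiv, fptL_apply]

lemma pd_comp_bpt_ca {F : (Fin p → ℝ) → ℝ} {z : Fin (p + q) → ℝ}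
    (hF : DifferentiableAt ℝ F (bpt z)) (e : Fin p) :
    pd (fun y => F (bpt y)) (Fin.castAdd q e) z = pd F e (bpt z) := by
  rw [pd_comp_bpt hF, bpt_single_ca]; rfl

lemma pd_comp_bpt_na {F : (Fin p → ℝ) → ℝ} {z : Fin (p + q) → ℝ}
    (hF : DifferentiableAt ℝ F (bpt z)) (ε : Fin q) :
    pd (fun y => F (bpt y)) (Fin.natAdd p ε) z = 0 := by
  rw [pd_comp_bpt hF, bpt_single_na, map_zero]

lemma pd_comp_fpt_na {F : (Fin q → ℝ) → ℝ} {z : Fin (p + q) → ℝ}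
    (hF : DifferentiableAt ℝ F (fpt z)) (ε : Fin q) :
    pd (fun y => F (fpt y)) (Fin.natAdd p ε) z = pd F ε (fpt z) := by
  rw [pd_comp_fpt hF, fpt_single_na]; rfl

lemma pd_comp_fpt_ca {F : (Fin q → ℝ) → ℝ} {z : Fin (p + q) → ℝ}
    (hF : DifferentiableAt ℝ F (fpt z)) (e : Fin p) :
    pd (fun y => F (fpt y)) (Fin.castAdd q e) z = 0 := by
  rw [pd_comp_fpt hF, fpt_single_ca, map_zero]

lemma pd_mul {F G : (Fin k → ℝ) → ℝ} {z : Fin k → ℝ}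
    (hF : DifferentiableAt ℝ F z) (hG : DifferentiableAt ℝ G z) (j : Fin k) :
    pd (fun y => F y * G y) j z = pd F j z * G z + F z * pd G j z := by
  unfold pd
  rw [fderiv_fun_mul hF hG]
  simp; ring

lemma pd_const (c : ℝ) (j : Fin k) (z : Fin k → ℝ) : pd (fun _ => c) j z = 0 := by
  unfold pd; simp

lemma pd_congr_nhds {F G : (Fin k → ℝ) → ℝ} {z : Fin k → ℝ}
    (h : F =ᶠ[𝓝 z] G) (j : Fin k) : pd F j z = pd G j z := by
  unfold pd; rw [h.fderiv_eq]

lemma eventuallyEq_of_open {W : Set (Fin k → ℝ)} (hW : IsOpen W) {z : Fin k → ℝ}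
    (hz : z ∈ W) {F G : (Fin k → ℝ) → ℝ} (h : ∀ y ∈ W, F y = G y) : F =ᶠ[𝓝 z] G :=
  Filter.eventually_of_mem (hW.mem_nhds hz) h

end Infra

lemma sum_scaled {n : ℕ} (A : Fin n → ℝ) (P Q : ℝ) :
    (∑ c, P * A c * Q) = P * (∑ c, A c) * Q := by
  rw [← Finset.sum_mul, ← Finset.mul_sum]

lemma pd_add {k : ℕ} {F G : (Fin k → ℝ) → ℝ} {z : Fin k → ℝ}
    (hF : DifferentiableAt ℝ F z) (hG : DifferentiableAt ℝ G z) (j : Fin k) :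
    pd (fun y => F y + G y) j z = pd F j z + pd G j z := by
  unfold pd
  rw [fderiv_fun_add hF hG]
  simp

lemma pd_neg {k : ℕ} {F : (Fin k → ℝ) → ℝ} {z : Fin k → ℝ} (j : Fin k) :
    pd (fun y => -F y) j z = -pd F j z := by
  unfold pd
  rw [fderiv_fun_neg]
  simp
/-! ### Smoothness of the inverse metric -/

section Inverse

variable {k m : ℕ} {W : Set (Fin k → ℝ)}

lemma contDiffOn_finset_prod {ι : Type*} [DecidableEq ι] (s : Finset ι)
    (F : ι → (Fin k → ℝ) → ℝ) (h : ∀ i ∈ s, ContDiffOn ℝ (⊤ : ℕ∞) (F i) W) :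
    ContDiffOn ℝ (⊤ : ℕ∞) (fun x => ∏ i ∈ s, F i x) W := by
  classical
  induction s using Finset.induction_on with
  | empty =>
    simp only [Finset.prod_empty]
    exact contDiffOn_const
  | insert a s hni ih =>
    simp only [Finset.prod_insert hni]
    exact (h a (Finset.mem_insert_self a s)).mul
      (ih fun i hi => h i (Finset.mem_insert_of_mem hi))

lemma contDiffOn_det (M : (Fin k → ℝ) → Matrix (Fin m) (Fin m) ℝ)
    (h : ∀ i j, ContDiffOn ℝ (⊤ : ℕ∞) (fun x => M x i j) W) :
    ContDiffOn ℝ (⊤ : ℕ∞) (fun x => (M x).det) W := by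
  have : (fun x => (M x).det) =
      fun x => ∑ σ : Equiv.Perm (Fin m), ((Equiv.Perm.sign σ : ℤ) : ℝ) * ∏ i, M x (σ i) i := by
    funext x
    rw [Matrix.det_apply']
  rw [this]
  refine ContDiffOn.sum fun σ _ => ?_
  exact contDiffOn_const.mul (contDiffOn_finset_prod _ _ fun i _ => h (σ i) i)

lemma inverse_contDiffOn
    (A B : (Fin k → ℝ) → Fin m → Fin m → ℝ)
    (hA : ∀ a b, ContDiffOn ℝ (⊤ : ℕ∞) (fun x => A x a b) W)
    (hAB : ∀ x ∈ W, ∀ a b, (∑ c, A x a c * B x c b) = if a = b then (1 : ℝ) else 0) :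
    ∀ a b, ContDiffOn ℝ (⊤ : ℕ∞) (fun x => B x a b) W := by
  intro a b
  have key : ∀ x ∈ W, (Matrix.of (A x)) * (Matrix.of (B x)) = 1 := by
    intro x hx
    ext i j
    rw [Matrix.mul_apply, Matrix.one_apply]
    exact hAB x hx i j
  have hdet : ∀ x ∈ W, (Matrix.of (A x)).det ≠ 0 := by
    intro x hx
    intro h0
    have := congrArg Matrix.det (key x hx)
    rw [Matrix.det_mul, h0, Matrix.det_one] at this
    simp at this
  have hBeq : ∀ x ∈ W, B x a b =
      ((Matrix.of (A x)).det)⁻¹ * (Matrix.of (A x)).adjugate a b := by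
    intro x hx
    have h1 : (Matrix.of (A x))⁻¹ = Matrix.of (B x) := Matrix.inv_eq_right_inv (key x hx)
    have h2 : B x a b = (Matrix.of (A x))⁻¹ a b := by rw [h1]; rfl
    rw [h2, Matrix.inv_def, Matrix.smul_apply, Ring.inverse_eq_inv, smul_eq_mul]
  have hadj : ContDiffOn ℝ (⊤ : ℕ∞) (fun x => (Matrix.of (A x)).adjugate a b) W := by
    have : (fun x => (Matrix.of (A x)).adjugate a b) =
        fun x => ((Matrix.of (A x)).updateRow b (Pi.single a 1)).det := by
      funext x; rw [Matrix.adjugate_apply]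
    rw [this]
    refine contDiffOn_det _ fun i j => ?_
    by_cases hib : i = b
    · subst hib
      have heq : (fun x => (Matrix.of (A x)).updateRow i (Pi.single a 1) i j) =
          fun _ : Fin k → ℝ => ((Pi.single a 1 : Fin m → ℝ) j) := by
        funext x; simp [Matrix.updateRow_apply]
      rw [heq]
      exact contDiffOn_const
    · simpa [Matrix.updateRow_apply, hib] using hA i j
  have hdetc : ContDiffOn ℝ (⊤ : ℕ∞) (fun x => (Matrix.of (A x)).det) W :=
    contDiffOn_det _ fun i j => hA i j
  exact ContDiffOn.congr ((hdetc.inv hdet).mul hadj) hBeq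

lemma left_inverse_of_right {A B : (Fin k → ℝ) → Fin m → Fin m → ℝ}
    (hAB : ∀ x ∈ W, ∀ a b, (∑ c, A x a c * B x c b) = if a = b then (1 : ℝ) else 0) :
    ∀ x ∈ W, ∀ a b, (∑ c, B x a c * A x c b) = if a = b then (1 : ℝ) else 0 := by
  intro x hx a b
  have key : (Matrix.of (A x)) * (Matrix.of (B x)) = 1 := by
    ext i j
    rw [Matrix.mul_apply, Matrix.one_apply]
    exact hAB x hx i j
  have key2 : (Matrix.of (B x)) * (Matrix.of (A x)) = 1 := mul_eq_one_comm.mp key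
  have := congrFun (congrFun key2 a) b
  rw [Matrix.mul_apply, Matrix.one_apply] at this
  exact this

end Inverse
/-! ### Smoothness of `pd` -/

section Smooth

variable {k : ℕ} {W : Set (Fin k → ℝ)}

lemma pd_contDiffOn {F : (Fin k → ℝ) → ℝ} (hW : IsOpen W)
    (hF : ContDiffOn ℝ (⊤ : ℕ∞) F W) (j : Fin k) :
    ContDiffOn ℝ (⊤ : ℕ∞) (pd F j) W := by
  have h1 : ContDiffOn ℝ (⊤ : ℕ∞) (fderiv ℝ F) W :=
    ((contDiffOn_infty_iff_fderiv_of_isOpen hW).mp hF).2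
  have h2 : pd F j = (fun L : (Fin k → ℝ) →L[ℝ] ℝ => L (Pi.single j 1)) ∘ fderiv ℝ F := rfl
  rw [h2]
  exact (ContinuousLinearMap.apply ℝ ℝ (Pi.single j 1)).contDiff.comp_contDiffOn h1

lemma diffAt_of_contDiffOn {F : (Fin k → ℝ) → ℝ} (hW : IsOpen W)
    (hF : ContDiffOn ℝ (⊤ : ℕ∞) F W) {x : Fin k → ℝ} (hx : x ∈ W) :
    DifferentiableAt ℝ F x :=
  ((hF.contDiffAt (hW.mem_nhds hx)).differentiableAt (by simp))

lemma contDiffOn_fin_sum {n : ℕ} {F : Fin n → (Fin k → ℝ) → ℝ}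
    (h : ∀ i, ContDiffOn ℝ (⊤ : ℕ∞) (F i) W) :
    ContDiffOn ℝ (⊤ : ℕ∞) (fun x => ∑ i, F i x) W :=
  ContDiffOn.sum fun i _ => h i

end Smooth
/-! ### Warped product context -/

section Components

variable {p q : ℕ}

lemma wPair_cc (A : (Fin p → ℝ) → Fin p → Fin p → ℝ) (B : (Fin q → ℝ) → Fin q → Fin q → ℝ)
    (c : (Fin p → ℝ) → ℝ) (z : Fin (p + q) → ℝ) (a b : Fin p) :
    wPair A B c z (Fin.castAdd q a) (Fin.castAdd q b) = A (bpt z) a b := by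
  simp [wPair]

lemma wPair_cn (A : (Fin p → ℝ) → Fin p → Fin p → ℝ) (B : (Fin q → ℝ) → Fin q → Fin q → ℝ)
    (c : (Fin p → ℝ) → ℝ) (z : Fin (p + q) → ℝ) (a : Fin p) (β : Fin q) :
    wPair A B c z (Fin.castAdd q a) (Fin.natAdd p β) = 0 := by
  simp [wPair]

lemma wPair_nc (A : (Fin p → ℝ) → Fin p → Fin p → ℝ) (B : (Fin q → ℝ) → Fin q → Fin q → ℝ)
    (c : (Fin p → ℝ) → ℝ) (z : Fin (p + q) → ℝ) (α : Fin q) (b : Fin p) :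
    wPair A B c z (Fin.natAdd p α) (Fin.castAdd q b) = 0 := by
  simp [wPair]

lemma wPair_nn (A : (Fin p → ℝ) → Fin p → Fin p → ℝ) (B : (Fin q → ℝ) → Fin q → Fin q → ℝ)
    (c : (Fin p → ℝ) → ℝ) (z : Fin (p + q) → ℝ) (α β : Fin q) :
    wPair A B c z (Fin.natAdd p α) (Fin.natAdd p β) = c (bpt z) * B (fpt z) α β := by
  simp [wPair]

end Components

/-- A bundled warped-product context. -/
structure WCtx (p q : ℕ) where
  U : Set (Fin p → ℝ)
  V : Set (Fin q → ℝ)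
  hU : IsOpen U
  hV : IsOpen V
  gbar : (Fin p → ℝ) → Fin p → Fin p → ℝ
  gbinv : (Fin p → ℝ) → Fin p → Fin p → ℝ
  gtil : (Fin q → ℝ) → Fin q → Fin q → ℝ
  gtinv : (Fin q → ℝ) → Fin q → Fin q → ℝ
  f : (Fin p → ℝ) → ℝ
  hgb : ∀ a b, ContDiffOn ℝ (⊤ : ℕ∞) (fun x => gbar x a b) U
  hgbs : ∀ x ∈ U, ∀ a b, gbar x a b = gbar x b a
  hgbi : ∀ x ∈ U, ∀ a b, (∑ c, gbar x a c * gbinv x c b) = if a = b then (1 : ℝ) else 0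
  hgt : ∀ a b, ContDiffOn ℝ (⊤ : ℕ∞) (fun y => gtil y a b) V
  hgts : ∀ y ∈ V, ∀ a b, gtil y a b = gtil y b a
  hgti : ∀ y ∈ V, ∀ a b, (∑ c, gtil y a c * gtinv y c b) = if a = b then (1 : ℝ) else 0
  hf : ContDiffOn ℝ (⊤ : ℕ∞) f U
  hfpos : ∀ x ∈ U, 0 < f x

namespace WCtx

variable {p q : ℕ} (C : WCtx p q)

/-- The warped metric of a context. -/
def M : (Fin (p + q) → ℝ) → Fin (p + q) → Fin (p + q) → ℝ := wMet C.gbar C.gtil C.f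

/-- The inverse warped metric of a context. -/
def Minv : (Fin (p + q) → ℝ) → Fin (p + q) → Fin (p + q) → ℝ := wMetInv C.gbinv C.gtinv C.f

lemma openM : IsOpen (Mset C.U C.V) := isOpen_Mset C.hU C.hV

lemma fne {x : Fin p → ℝ} (hx : x ∈ C.U) : C.f x ≠ 0 := ne_of_gt (C.hfpos x hx)

lemma hgbinv : ∀ a b, ContDiffOn ℝ (⊤ : ℕ∞) (fun x => C.gbinv x a b) C.U :=
  inverse_contDiffOn _ _ C.hgb C.hgbi

lemma hgtinv : ∀ a b, ContDiffOn ℝ (⊤ : ℕ∞) (fun y => C.gtinv y a b) C.V :=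
  inverse_contDiffOn _ _ C.hgt C.hgti

lemma gbinv_gbar : ∀ x ∈ C.U, ∀ a b,
    (∑ c, C.gbinv x a c * C.gbar x c b) = if a = b then (1 : ℝ) else 0 :=
  left_inverse_of_right C.hgbi

lemma gtinv_gtil : ∀ y ∈ C.V, ∀ a b,
    (∑ c, C.gtinv y a c * C.gtil y c b) = if a = b then (1 : ℝ) else 0 :=
  left_inverse_of_right C.hgti

lemma diff_f {x : Fin p → ℝ} (hx : x ∈ C.U) : DifferentiableAt ℝ C.f x :=
  diffAt_of_contDiffOn C.hU C.hf hx

lemma diff_pdf (e : Fin p) {x : Fin p → ℝ} (hx : x ∈ C.U) :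
    DifferentiableAt ℝ (pd C.f e) x :=
  diffAt_of_contDiffOn C.hU (pd_contDiffOn C.hU C.hf e) hx

lemma diff_gb (a b : Fin p) {x : Fin p → ℝ} (hx : x ∈ C.U) :
    DifferentiableAt ℝ (fun y => C.gbar y a b) x :=
  diffAt_of_contDiffOn C.hU (C.hgb a b) hx

lemma diff_gbinv (a b : Fin p) {x : Fin p → ℝ} (hx : x ∈ C.U) :
    DifferentiableAt ℝ (fun y => C.gbinv y a b) x :=
  diffAt_of_contDiffOn C.hU (C.hgbinv a b) hx

lemma diff_gt (a b : Fin q) {y : Fin q → ℝ} (hy : y ∈ C.V) :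
    DifferentiableAt ℝ (fun w => C.gtil w a b) y :=
  diffAt_of_contDiffOn C.hV (C.hgt a b) hy

lemma diff_gtinv (a b : Fin q) {y : Fin q → ℝ} (hy : y ∈ C.V) :
    DifferentiableAt ℝ (fun w => C.gtinv w a b) y :=
  diffAt_of_contDiffOn C.hV (C.hgtinv a b) hy

lemma diff_pdgt (a b : Fin q) (r : Fin q) {y : Fin q → ℝ} (hy : y ∈ C.V) :
    DifferentiableAt ℝ (pd (fun w => C.gtil w a b) r) y :=
  diffAt_of_contDiffOn C.hV (pd_contDiffOn C.hV (C.hgt a b) r) hy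

/-! #### Partial derivatives of the metric components -/

variable {z : Fin (p + q) → ℝ}

lemma mem_U (hz : z ∈ Mset C.U C.V) : bpt z ∈ C.U := hz.1

lemma mem_V (hz : z ∈ Mset C.U C.V) : fpt z ∈ C.V := hz.2

lemma Mf_cc (a b : Fin p) :
    (fun y => C.M y (Fin.castAdd q a) (Fin.castAdd q b)) = fun y => C.gbar (bpt y) a b :=
  funext fun y => wPair_cc _ _ _ y a b

lemma Mf_cn (a : Fin p) (β : Fin q) :
    (fun y => C.M y (Fin.castAdd q a) (Fin.natAdd p β)) = fun _ => (0 : ℝ) :=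
  funext fun y => wPair_cn _ _ _ y a β

lemma Mf_nc (α : Fin q) (b : Fin p) :
    (fun y => C.M y (Fin.natAdd p α) (Fin.castAdd q b)) = fun _ => (0 : ℝ) :=
  funext fun y => wPair_nc _ _ _ y α b

lemma Mf_nn (α β : Fin q) :
    (fun y => C.M y (Fin.natAdd p α) (Fin.natAdd p β)) =
      fun y => C.f (bpt y) * C.gtil (fpt y) α β :=
  funext fun y => wPair_nn _ _ _ y α β

lemma pdM_cc_ca (hz : z ∈ Mset C.U C.V) (a b e : Fin p) :
    pd (fun y => C.M y (Fin.castAdd q a) (Fin.castAdd q b)) (Fin.castAdd q e) z =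
      pd (fun x => C.gbar x a b) e (bpt z) := by
  rw [Mf_cc]
  exact pd_comp_bpt_ca (C.diff_gb a b (C.mem_U hz)) e

lemma pdM_cc_na (hz : z ∈ Mset C.U C.V) (a b : Fin p) (ε : Fin q) :
    pd (fun y => C.M y (Fin.castAdd q a) (Fin.castAdd q b)) (Fin.natAdd p ε) z = 0 := by
  rw [Mf_cc]
  exact pd_comp_bpt_na (C.diff_gb a b (C.mem_U hz)) ε

lemma pdM_cn (a : Fin p) (β : Fin q) (j : Fin (p + q)) :
    pd (fun y => C.M y (Fin.castAdd q a) (Fin.natAdd p β)) j z = 0 := by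
  rw [Mf_cn]
  exact pd_const 0 j z

lemma pdM_nc (α : Fin q) (b : Fin p) (j : Fin (p + q)) :
    pd (fun y => C.M y (Fin.natAdd p α) (Fin.castAdd q b)) j z = 0 := by
  rw [Mf_nc]
  exact pd_const 0 j z

lemma pdM_nn_ca (hz : z ∈ Mset C.U C.V) (α β : Fin q) (e : Fin p) :
    pd (fun y => C.M y (Fin.natAdd p α) (Fin.natAdd p β)) (Fin.castAdd q e) z =
      pd C.f e (bpt z) * C.gtil (fpt z) α β := by
  rw [Mf_nn]
  rw [pd_mul (diffAt_comp_bpt (C.diff_f (C.mem_U hz)))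
    (diffAt_comp_fpt (C.diff_gt α β (C.mem_V hz))) _]
  rw [pd_comp_bpt_ca (C.diff_f (C.mem_U hz)), pd_comp_fpt_ca (C.diff_gt α β (C.mem_V hz))]
  ring

lemma pdM_nn_na (hz : z ∈ Mset C.U C.V) (α β : Fin q) (γ : Fin q) :
    pd (fun y => C.M y (Fin.natAdd p α) (Fin.natAdd p β)) (Fin.natAdd p γ) z =
      C.f (bpt z) * pd (fun w => C.gtil w α β) γ (fpt z) := by
  rw [Mf_nn]
  rw [pd_mul (diffAt_comp_bpt (C.diff_f (C.mem_U hz)))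
    (diffAt_comp_fpt (C.diff_gt α β (C.mem_V hz))) _]
  rw [pd_comp_bpt_na (C.diff_f (C.mem_U hz)), pd_comp_fpt_na (C.diff_gt α β (C.mem_V hz))]
  ring

end WCtx

namespace WCtx

variable {p q : ℕ} (C : WCtx p q) {z : Fin (p + q) → ℝ}

lemma M_cc (a b : Fin p) : C.M z (Fin.castAdd q a) (Fin.castAdd q b) = C.gbar (bpt z) a b :=
  wPair_cc _ _ _ z a b

lemma M_cn (a : Fin p) (β : Fin q) : C.M z (Fin.castAdd q a) (Fin.natAdd p β) = 0 :=
  wPair_cn _ _ _ z a β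

lemma M_nc (α : Fin q) (b : Fin p) : C.M z (Fin.natAdd p α) (Fin.castAdd q b) = 0 :=
  wPair_nc _ _ _ z α b

lemma M_nn (α β : Fin q) : C.M z (Fin.natAdd p α) (Fin.natAdd p β) =
    C.f (bpt z) * C.gtil (fpt z) α β :=
  wPair_nn _ _ _ z α β

lemma Minv_cc (a b : Fin p) : C.Minv z (Fin.castAdd q a) (Fin.castAdd q b) =
    C.gbinv (bpt z) a b := by
  unfold Minv wMetInv; exact wPair_cc _ _ _ z a b

lemma Minv_cn (a : Fin p) (β : Fin q) : C.Minv z (Fin.castAdd q a) (Fin.natAdd p β) = 0 := by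
  unfold Minv wMetInv; exact wPair_cn _ _ _ z a β

lemma Minv_nc (α : Fin q) (b : Fin p) : C.Minv z (Fin.natAdd p α) (Fin.castAdd q b) = 0 := by
  unfold Minv wMetInv; exact wPair_nc _ _ _ z α b

lemma Minv_nn (α β : Fin q) : C.Minv z (Fin.natAdd p α) (Fin.natAdd p β) =
    (C.f (bpt z))⁻¹ * C.gtinv (fpt z) α β := by
  unfold Minv wMetInv; exact wPair_nn _ _ _ z α β

/-- The vector field `D^a = ḡ^{ab} f_b`. -/
def Dv (x : Fin p → ℝ) (a : Fin p) : ℝ := ∑ c, C.gbinv x a c * pd C.f c x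

/-! #### Christoffel symbols of the warped metric -/

lemma Gamma_ccc (hz : z ∈ Mset C.U C.V) (a b c : Fin p) :
    Christoffel C.M C.Minv (Fin.castAdd q a) (Fin.castAdd q b) (Fin.castAdd q c) z =
      Christoffel C.gbar C.gbinv a b c (bpt z) := by
  unfold Christoffel
  rw [Fin.sum_univ_add]
  simp only [C.Minv_cn, zero_mul, Finset.sum_const_zero, add_zero, C.Minv_cc]
  congr 1
  refine Finset.sum_congr rfl fun d _ => ?_
  rw [C.pdM_cc_ca hz, C.pdM_cc_ca hz, C.pdM_cc_ca hz]

lemma Gamma_ccn (hz : z ∈ Mset C.U C.V) (a b : Fin p) (γ : Fin q) :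
    Christoffel C.M C.Minv (Fin.castAdd q a) (Fin.castAdd q b) (Fin.natAdd p γ) z = 0 := by
  unfold Christoffel
  rw [Fin.sum_univ_add]
  simp only [C.Minv_cn, zero_mul, Finset.sum_const_zero, add_zero, C.Minv_cc]
  rw [Finset.sum_eq_zero, mul_zero]
  intro d _
  rw [C.pdM_cn, C.pdM_cc_na hz, C.pdM_cn]
  ring

lemma Gamma_cnc (hz : z ∈ Mset C.U C.V) (a : Fin p) (β : Fin q) (c : Fin p) :
    Christoffel C.M C.Minv (Fin.castAdd q a) (Fin.natAdd p β) (Fin.castAdd q c) z = 0 := by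
  unfold Christoffel
  rw [Fin.sum_univ_add]
  simp only [C.Minv_cn, zero_mul, Finset.sum_const_zero, add_zero, C.Minv_cc]
  rw [Finset.sum_eq_zero, mul_zero]
  intro d _
  rw [C.pdM_cc_na hz, C.pdM_nc, C.pdM_nc]
  ring

lemma Gamma_cnn (hz : z ∈ Mset C.U C.V) (a : Fin p) (β γ : Fin q) :
    Christoffel C.M C.Minv (Fin.castAdd q a) (Fin.natAdd p β) (Fin.natAdd p γ) z =
      -(1 / 2) * C.Dv (bpt z) a * C.gtil (fpt z) β γ := by
  unfold Christoffel
  rw [Fin.sum_univ_add]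
  simp only [C.Minv_cn, zero_mul, Finset.sum_const_zero, add_zero, C.Minv_cc]
  have : ∀ d : Fin p, d ∈ Finset.univ →
      C.gbinv (bpt z) a d *
        (pd (fun y => C.M y (Fin.castAdd q d) (Fin.natAdd p γ)) (Fin.natAdd p β) z +
          pd (fun y => C.M y (Fin.natAdd p β) (Fin.castAdd q d)) (Fin.natAdd p γ) z -
          pd (fun y => C.M y (Fin.natAdd p β) (Fin.natAdd p γ)) (Fin.castAdd q d) z) =
      -(C.gbinv (bpt z) a d * pd C.f d (bpt z)) * C.gtil (fpt z) β γ := by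
    intro d _
    rw [C.pdM_cn, C.pdM_nc, C.pdM_nn_ca hz]
    ring
  rw [Finset.sum_congr rfl this]
  unfold Dv
  simp only [neg_mul, Finset.sum_neg_distrib, ← Finset.sum_mul]
  ring

lemma Gamma_ncc (hz : z ∈ Mset C.U C.V) (α : Fin q) (b c : Fin p) :
    Christoffel C.M C.Minv (Fin.natAdd p α) (Fin.castAdd q b) (Fin.castAdd q c) z = 0 := by
  unfold Christoffel
  rw [Fin.sum_univ_add]
  simp only [C.Minv_nc, zero_mul, Finset.sum_const_zero, zero_add, C.Minv_nn]
  rw [Finset.sum_eq_zero, mul_zero]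
  intro ε _
  rw [C.pdM_nc, C.pdM_cn, C.pdM_cc_na hz]
  ring

lemma Gamma_ncn (hz : z ∈ Mset C.U C.V) (α : Fin q) (b : Fin p) (γ : Fin q) :
    Christoffel C.M C.Minv (Fin.natAdd p α) (Fin.castAdd q b) (Fin.natAdd p γ) z =
      pd C.f b (bpt z) / (2 * C.f (bpt z)) * (if α = γ then 1 else 0) := by
  unfold Christoffel
  rw [Fin.sum_univ_add]
  simp only [C.Minv_nc, zero_mul, Finset.sum_const_zero, zero_add, C.Minv_nn]
  have : ∀ ε : Fin q, ε ∈ Finset.univ →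
      (C.f (bpt z))⁻¹ * C.gtinv (fpt z) α ε *
        (pd (fun y => C.M y (Fin.natAdd p ε) (Fin.natAdd p γ)) (Fin.castAdd q b) z +
          pd (fun y => C.M y (Fin.castAdd q b) (Fin.natAdd p ε)) (Fin.natAdd p γ) z -
          pd (fun y => C.M y (Fin.castAdd q b) (Fin.natAdd p γ)) (Fin.natAdd p ε) z) =
      ((C.f (bpt z))⁻¹ * pd C.f b (bpt z)) * (C.gtinv (fpt z) α ε * C.gtil (fpt z) ε γ) := by
    intro ε _
    rw [C.pdM_nn_ca hz, C.pdM_cn, C.pdM_cn]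
    ring
  rw [Finset.sum_congr rfl this, ← Finset.mul_sum,
    C.gtinv_gtil (fpt z) (C.mem_V hz) α γ]
  have hfz := C.fne (C.mem_U hz)
  field_simp

lemma Gamma_nnc (hz : z ∈ Mset C.U C.V) (α β : Fin q) (c : Fin p) :
    Christoffel C.M C.Minv (Fin.natAdd p α) (Fin.natAdd p β) (Fin.castAdd q c) z =
      pd C.f c (bpt z) / (2 * C.f (bpt z)) * (if α = β then 1 else 0) := by
  unfold Christoffel
  rw [Fin.sum_univ_add]
  simp only [C.Minv_nc, zero_mul, Finset.sum_const_zero, zero_add, C.Minv_nn]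
  have : ∀ ε : Fin q, ε ∈ Finset.univ →
      (C.f (bpt z))⁻¹ * C.gtinv (fpt z) α ε *
        (pd (fun y => C.M y (Fin.natAdd p ε) (Fin.castAdd q c)) (Fin.natAdd p β) z +
          pd (fun y => C.M y (Fin.natAdd p β) (Fin.natAdd p ε)) (Fin.castAdd q c) z -
          pd (fun y => C.M y (Fin.natAdd p β) (Fin.castAdd q c)) (Fin.natAdd p ε) z) =
      ((C.f (bpt z))⁻¹ * pd C.f c (bpt z)) * (C.gtinv (fpt z) α ε * C.gtil (fpt z) ε β) := by
    intro ε _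
    rw [C.pdM_nc, C.pdM_nn_ca hz, C.pdM_nc]
    rw [C.hgts (fpt z) (C.mem_V hz) β ε]
    ring
  rw [Finset.sum_congr rfl this, ← Finset.mul_sum,
    C.gtinv_gtil (fpt z) (C.mem_V hz) α β]
  have hfz := C.fne (C.mem_U hz)
  field_simp

lemma Gamma_nnn (hz : z ∈ Mset C.U C.V) (α β γ : Fin q) :
    Christoffel C.M C.Minv (Fin.natAdd p α) (Fin.natAdd p β) (Fin.natAdd p γ) z =
      Christoffel C.gtil C.gtinv α β γ (fpt z) := by
  unfold Christoffel
  rw [Fin.sum_univ_add]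
  simp only [C.Minv_nc, zero_mul, Finset.sum_const_zero, zero_add, C.Minv_nn]
  have : ∀ ε : Fin q, ε ∈ Finset.univ →
      (C.f (bpt z))⁻¹ * C.gtinv (fpt z) α ε *
        (pd (fun y => C.M y (Fin.natAdd p ε) (Fin.natAdd p γ)) (Fin.natAdd p β) z +
          pd (fun y => C.M y (Fin.natAdd p β) (Fin.natAdd p ε)) (Fin.natAdd p γ) z -
          pd (fun y => C.M y (Fin.natAdd p β) (Fin.natAdd p γ)) (Fin.natAdd p ε) z) =
      C.gtinv (fpt z) α ε *
        (pd (fun w => C.gtil w ε γ) β (fpt z) + pd (fun w => C.gtil w β ε) γ (fpt z) -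
          pd (fun w => C.gtil w β γ) ε (fpt z)) := by
    intro ε _
    rw [C.pdM_nn_na hz, C.pdM_nn_na hz, C.pdM_nn_na hz]
    have hfz := C.fne (C.mem_U hz)
    field_simp
  rw [Finset.sum_congr rfl this]

end WCtx
/-! ### Smoothness of derived objects, derivatives of Christoffel symbols -/

namespace WCtx

variable {p q : ℕ} (C : WCtx p q) {z : Fin (p + q) → ℝ}

/-- `Sc = (∑_c f_c D^c)/(4f) = f P`. -/
def Sc (x : Fin p → ℝ) : ℝ := (∑ c, pd C.f c x * C.Dv x c) / (4 * C.f x)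

lemma hDv (a : Fin p) : ContDiffOn ℝ (⊤ : ℕ∞) (fun x => C.Dv x a) C.U :=
  contDiffOn_fin_sum fun c => (C.hgbinv a c).mul (pd_contDiffOn C.hU C.hf c)

lemma hSc : ContDiffOn ℝ (⊤ : ℕ∞) C.Sc C.U := by
  unfold Sc
  refine ContDiffOn.div ?_ ?_ ?_
  · exact contDiffOn_fin_sum fun c => (pd_contDiffOn C.hU C.hf c).mul (C.hDv c)
  · exact contDiffOn_const.mul C.hf
  · intro x hx
    have := C.fne hx
    positivity

lemma hfSc : ContDiffOn ℝ (⊤ : ℕ∞) (fun x => C.f x * C.Sc x) C.U := C.hf.mul C.hSc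

lemma hGammat (i j l : Fin q) :
    ContDiffOn ℝ (⊤ : ℕ∞) (Christoffel C.gtil C.gtinv i j l) C.V := by
  unfold Christoffel
  refine contDiffOn_const.mul (contDiffOn_fin_sum fun r => (C.hgtinv i r).mul ?_)
  exact ((pd_contDiffOn C.hV (C.hgt r l) j).add (pd_contDiffOn C.hV (C.hgt j r) l)).sub
    (pd_contDiffOn C.hV (C.hgt j l) r)

lemma diff_Gammat (i j l : Fin q) {y : Fin q → ℝ} (hy : y ∈ C.V) :
    DifferentiableAt ℝ (Christoffel C.gtil C.gtinv i j l) y :=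
  diffAt_of_contDiffOn C.hV (C.hGammat i j l) hy

lemma hRiemT (i j s l : Fin q) :
    ContDiffOn ℝ (⊤ : ℕ∞) (fun y => Riem C.gtil C.gtinv y i j s l) C.V := by
  unfold Riem
  refine contDiffOn_fin_sum fun r => (C.hgt i r).mul ?_
  refine ContDiffOn.sub (ContDiffOn.add (ContDiffOn.sub ?_ ?_) ?_) ?_
  · exact pd_contDiffOn C.hV (C.hGammat r l j) s
  · exact pd_contDiffOn C.hV (C.hGammat r s j) l
  · exact contDiffOn_fin_sum fun t => (C.hGammat r s t).mul (C.hGammat t l j)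
  · exact contDiffOn_fin_sum fun t => (C.hGammat r l t).mul (C.hGammat t s j)

lemma diff_RiemT (i j s l : Fin q) {y : Fin q → ℝ} (hy : y ∈ C.V) :
    DifferentiableAt ℝ (fun w => Riem C.gtil C.gtinv w i j s l) y :=
  diffAt_of_contDiffOn C.hV (C.hRiemT i j s l) hy

/-! #### Derivatives of the Christoffel symbols of the warped metric -/

lemma pdGamma_nnn (hz : z ∈ Mset C.U C.V) (ε δ β γ : Fin q) :
    pd (Christoffel C.M C.Minv (Fin.natAdd p ε) (Fin.natAdd p δ) (Fin.natAdd p β))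
      (Fin.natAdd p γ) z =
    pd (Christoffel C.gtil C.gtinv ε δ β) γ (fpt z) := by
  have heq : Christoffel C.M C.Minv (Fin.natAdd p ε) (Fin.natAdd p δ) (Fin.natAdd p β) =ᶠ[𝓝 z]
      fun y => Christoffel C.gtil C.gtinv ε δ β (fpt y) :=
    eventuallyEq_of_open C.openM hz fun y hy => C.Gamma_nnn hy ε δ β
  rw [pd_congr_nhds heq, pd_comp_fpt_na (C.diff_Gammat ε δ β (C.mem_V hz))]

lemma pdGamma_cnn_cb (hz : z ∈ Mset C.U C.V) (d : Fin p) (β α : Fin q) (b : Fin p) :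
    pd (Christoffel C.M C.Minv (Fin.castAdd q d) (Fin.natAdd p β) (Fin.natAdd p α))
      (Fin.castAdd q b) z =
    -(1 / 2) * pd (fun x => C.Dv x d) b (bpt z) * C.gtil (fpt z) β α := by
  have heq : Christoffel C.M C.Minv (Fin.castAdd q d) (Fin.natAdd p β) (Fin.natAdd p α) =ᶠ[𝓝 z]
      fun y => (-(1 / 2) * C.Dv (bpt y) d) * C.gtil (fpt y) β α := by
    refine eventuallyEq_of_open C.openM hz fun y hy => ?_
    rw [C.Gamma_cnn hy d β α]
  rw [pd_congr_nhds heq]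
  have h1 : DifferentiableAt ℝ (fun y => -(1 / 2) * C.Dv (bpt y) d) z := by
    exact (diffAt_comp_bpt (diffAt_of_contDiffOn C.hU (C.hDv d) (C.mem_U hz))).const_mul _
  have h2 : DifferentiableAt ℝ (fun y => C.gtil (fpt y) β α) z :=
    diffAt_comp_fpt (C.diff_gt β α (C.mem_V hz))
  rw [pd_mul h1 h2]
  have h3 : pd (fun y : Fin (p + q) → ℝ => -(1 / 2) * C.Dv (bpt y) d) (Fin.castAdd q b) z =
      -(1 / 2) * pd (fun x => C.Dv x d) b (bpt z) := by
    have h4 : DifferentiableAt ℝ (fun x => C.Dv x d) (bpt z) :=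
      diffAt_of_contDiffOn C.hU (C.hDv d) (C.mem_U hz)
    rw [pd_mul (differentiableAt_const _) (diffAt_comp_bpt h4), pd_const,
      pd_comp_bpt_ca h4]
    ring
  rw [h3, pd_comp_fpt_ca (C.diff_gt β α (C.mem_V hz))]
  ring

lemma pdGamma_ccn_nb (hz : z ∈ Mset C.U C.V) (d b : Fin p) (α β : Fin q) :
    pd (Christoffel C.M C.Minv (Fin.castAdd q d) (Fin.castAdd q b) (Fin.natAdd p α))
      (Fin.natAdd p β) z = 0 := by
  have heq : Christoffel C.M C.Minv (Fin.castAdd q d) (Fin.castAdd q b) (Fin.natAdd p α) =ᶠ[𝓝 z]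
      fun _ => (0 : ℝ) :=
    eventuallyEq_of_open C.openM hz fun y hy => C.Gamma_ccn hy d b α
  rw [pd_congr_nhds heq, pd_const]

end WCtx
/-! ### Curvature components of the warped metric -/

namespace WCtx

variable {p q : ℕ} (C : WCtx p q) {z : Fin (p + q) → ℝ}

lemma Riem_nnnn (hz : z ∈ Mset C.U C.V) (α β γ δ : Fin q) :
    Riem C.M C.Minv z (Fin.natAdd p α) (Fin.natAdd p β) (Fin.natAdd p γ) (Fin.natAdd p δ) =
      C.f (bpt z) * Riem C.gtil C.gtinv (fpt z) α β γ δ -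
        C.f (bpt z) * C.Sc (bpt z) *
          (C.gtil (fpt z) α γ * C.gtil (fpt z) β δ - C.gtil (fpt z) α δ * C.gtil (fpt z) β γ) := by
  have hfz := C.fne (C.mem_U hz)
  have hgs := C.hgts (fpt z) (C.mem_V hz)
  unfold Riem
  rw [Fin.sum_univ_add]
  simp only [C.M_nc, zero_mul, Finset.sum_const_zero, zero_add]
  have hstep : ∀ ε ∈ (Finset.univ : Finset (Fin q)),
      C.M z (Fin.natAdd p α) (Fin.natAdd p ε) *
        (pd (Christoffel C.M C.Minv (Fin.natAdd p ε) (Fin.natAdd p δ) (Fin.natAdd p β))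
            (Fin.natAdd p γ) z -
          pd (Christoffel C.M C.Minv (Fin.natAdd p ε) (Fin.natAdd p γ) (Fin.natAdd p β))
            (Fin.natAdd p δ) z +
          (∑ t, Christoffel C.M C.Minv (Fin.natAdd p ε) (Fin.natAdd p γ) t z *
            Christoffel C.M C.Minv t (Fin.natAdd p δ) (Fin.natAdd p β) z) -
          ∑ t, Christoffel C.M C.Minv (Fin.natAdd p ε) (Fin.natAdd p δ) t z *
            Christoffel C.M C.Minv t (Fin.natAdd p γ) (Fin.natAdd p β) z) =
      C.f (bpt z) * (C.gtil (fpt z) α ε *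
          (pd (Christoffel C.gtil C.gtinv ε δ β) γ (fpt z) -
            pd (Christoffel C.gtil C.gtinv ε γ β) δ (fpt z) +
            (∑ ζ, Christoffel C.gtil C.gtinv ε γ ζ (fpt z) *
              Christoffel C.gtil C.gtinv ζ δ β (fpt z)) -
            ∑ ζ, Christoffel C.gtil C.gtinv ε δ ζ (fpt z) *
              Christoffel C.gtil C.gtinv ζ γ β (fpt z))) +
        ((if ε = γ then 1 else 0) *
          (-(C.f (bpt z) * C.Sc (bpt z) * C.gtil (fpt z) α ε * C.gtil (fpt z) δ β)) +
         (if ε = δ then 1 else 0) *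
          (C.f (bpt z) * C.Sc (bpt z) * C.gtil (fpt z) α ε * C.gtil (fpt z) γ β)) := by
    intro ε _
    rw [C.M_nn, C.pdGamma_nnn hz, C.pdGamma_nnn hz, Fin.sum_univ_add, Fin.sum_univ_add]
    have e1 : ∀ c ∈ (Finset.univ : Finset (Fin p)),
        Christoffel C.M C.Minv (Fin.natAdd p ε) (Fin.natAdd p γ) (Fin.castAdd q c) z *
          Christoffel C.M C.Minv (Fin.castAdd q c) (Fin.natAdd p δ) (Fin.natAdd p β) z =
        (if ε = γ then 1 else 0) * (pd C.f c (bpt z) * C.Dv (bpt z) c) *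
          (-(1 / (4 * C.f (bpt z))) * C.gtil (fpt z) δ β) := by
      intro c _
      rw [C.Gamma_nnc hz, C.Gamma_cnn hz]
      field_simp
      ring
    have e2 : ∀ c ∈ (Finset.univ : Finset (Fin p)),
        Christoffel C.M C.Minv (Fin.natAdd p ε) (Fin.natAdd p δ) (Fin.castAdd q c) z *
          Christoffel C.M C.Minv (Fin.castAdd q c) (Fin.natAdd p γ) (Fin.natAdd p β) z =
        (if ε = δ then 1 else 0) * (pd C.f c (bpt z) * C.Dv (bpt z) c) *
          (-(1 / (4 * C.f (bpt z))) * C.gtil (fpt z) γ β) := by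
      intro c _
      rw [C.Gamma_nnc hz, C.Gamma_cnn hz]
      field_simp
      ring
    have e3 : ∀ ζ ∈ (Finset.univ : Finset (Fin q)),
        Christoffel C.M C.Minv (Fin.natAdd p ε) (Fin.natAdd p γ) (Fin.natAdd p ζ) z *
          Christoffel C.M C.Minv (Fin.natAdd p ζ) (Fin.natAdd p δ) (Fin.natAdd p β) z =
        Christoffel C.gtil C.gtinv ε γ ζ (fpt z) * Christoffel C.gtil C.gtinv ζ δ β (fpt z) :=
      fun ζ _ => by rw [C.Gamma_nnn hz, C.Gamma_nnn hz]
    have e4 : ∀ ζ ∈ (Finset.univ : Finset (Fin q)),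
        Christoffel C.M C.Minv (Fin.natAdd p ε) (Fin.natAdd p δ) (Fin.natAdd p ζ) z *
          Christoffel C.M C.Minv (Fin.natAdd p ζ) (Fin.natAdd p γ) (Fin.natAdd p β) z =
        Christoffel C.gtil C.gtinv ε δ ζ (fpt z) * Christoffel C.gtil C.gtinv ζ γ β (fpt z) :=
      fun ζ _ => by rw [C.Gamma_nnn hz, C.Gamma_nnn hz]
    rw [Finset.sum_congr rfl e1, Finset.sum_congr rfl e2, Finset.sum_congr rfl e3,
      Finset.sum_congr rfl e4, sum_scaled, sum_scaled]
    have hScv : C.Sc (bpt z) =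
        (∑ c, pd C.f c (bpt z) * C.Dv (bpt z) c) / (4 * C.f (bpt z)) := rfl
    rw [hScv]
    split_ifs <;> field_simp <;> ring
  rw [Finset.sum_congr rfl hstep, Finset.sum_add_distrib, Finset.sum_add_distrib,
    ← Finset.mul_sum]
  simp only [ite_mul, one_mul, zero_mul, Finset.sum_ite_eq', Finset.mem_univ, if_true]
  rw [hgs δ β, hgs γ β]
  ring

end WCtx
/-! ### Mixed curvature, Ricci and covariant derivative -/

namespace WCtx

variable {p q : ℕ} (C : WCtx p q) {z : Fin (p + q) → ℝ}

/-- `E_{ab}` with `R_{aαbβ} = E_{ab} g̃_{αβ}`. -/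
def Eten (x : Fin p → ℝ) (a b : Fin p) : ℝ :=
  ∑ d, C.gbar x a d *
    (-(1 / 2) * pd (fun w => C.Dv w d) b x -
      (1 / 2) * (∑ c, Christoffel C.gbar C.gbinv d b c x * C.Dv x c) +
      pd C.f b x * C.Dv x d / (4 * C.f x))

lemma pd_prod_bf {A : (Fin p → ℝ) → ℝ} {B : (Fin q → ℝ) → ℝ}
    (hA : DifferentiableAt ℝ A (bpt z)) (hB : DifferentiableAt ℝ B (fpt z)) (e : Fin p) :
    pd (fun y => A (bpt y) * B (fpt y)) (Fin.castAdd q e) z = pd A e (bpt z) * B (fpt z) := by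
  rw [pd_mul (diffAt_comp_bpt hA) (diffAt_comp_fpt hB), pd_comp_bpt_ca hA, pd_comp_fpt_ca hB]
  ring

lemma Riem_cncn (hz : z ∈ Mset C.U C.V) (a : Fin p) (α : Fin q) (b : Fin p) (β : Fin q) :
    Riem C.M C.Minv z (Fin.castAdd q a) (Fin.natAdd p α) (Fin.castAdd q b) (Fin.natAdd p β) =
      C.Eten (bpt z) a b * C.gtil (fpt z) α β := by
  have hfz := C.fne (C.mem_U hz)
  have hgs := C.hgts (fpt z) (C.mem_V hz)
  unfold Riem
  rw [Fin.sum_univ_add]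
  simp only [C.M_cn, zero_mul, Finset.sum_const_zero, add_zero]
  have hstep : ∀ d ∈ (Finset.univ : Finset (Fin p)),
      C.M z (Fin.castAdd q a) (Fin.castAdd q d) *
        (pd (Christoffel C.M C.Minv (Fin.castAdd q d) (Fin.natAdd p β) (Fin.natAdd p α))
            (Fin.castAdd q b) z -
          pd (Christoffel C.M C.Minv (Fin.castAdd q d) (Fin.castAdd q b) (Fin.natAdd p α))
            (Fin.natAdd p β) z +
          (∑ t, Christoffel C.M C.Minv (Fin.castAdd q d) (Fin.castAdd q b) t z *
            Christoffel C.M C.Minv t (Fin.natAdd p β) (Fin.natAdd p α) z) -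
          ∑ t, Christoffel C.M C.Minv (Fin.castAdd q d) (Fin.natAdd p β) t z *
            Christoffel C.M C.Minv t (Fin.castAdd q b) (Fin.natAdd p α) z) =
      (C.gbar (bpt z) a d *
        (-(1 / 2) * pd (fun w => C.Dv w d) b (bpt z) -
          (1 / 2) * (∑ c, Christoffel C.gbar C.gbinv d b c (bpt z) * C.Dv (bpt z) c) +
          pd C.f b (bpt z) * C.Dv (bpt z) d / (4 * C.f (bpt z)))) * C.gtil (fpt z) β α := by
    intro d _
    rw [C.M_cc, C.pdGamma_cnn_cb hz, C.pdGamma_ccn_nb hz, Fin.sum_univ_add, Fin.sum_univ_add]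
    have e1 : ∀ c ∈ (Finset.univ : Finset (Fin p)),
        Christoffel C.M C.Minv (Fin.castAdd q d) (Fin.castAdd q b) (Fin.castAdd q c) z *
          Christoffel C.M C.Minv (Fin.castAdd q c) (Fin.natAdd p β) (Fin.natAdd p α) z =
        Christoffel C.gbar C.gbinv d b c (bpt z) * C.Dv (bpt z) c *
          (-(1 / 2) * C.gtil (fpt z) β α) := by
      intro c _
      rw [C.Gamma_ccc hz, C.Gamma_cnn hz]
      ring
    have e2 : ∀ ζ ∈ (Finset.univ : Finset (Fin q)),
        Christoffel C.M C.Minv (Fin.castAdd q d) (Fin.castAdd q b) (Fin.natAdd p ζ) z *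
          Christoffel C.M C.Minv (Fin.natAdd p ζ) (Fin.natAdd p β) (Fin.natAdd p α) z = 0 := by
      intro ζ _
      rw [C.Gamma_ccn hz]
      ring
    have e3 : ∀ c ∈ (Finset.univ : Finset (Fin p)),
        Christoffel C.M C.Minv (Fin.castAdd q d) (Fin.natAdd p β) (Fin.castAdd q c) z *
          Christoffel C.M C.Minv (Fin.castAdd q c) (Fin.castAdd q b) (Fin.natAdd p α) z = 0 := by
      intro c _
      rw [C.Gamma_cnc hz]
      ring
    have e4 : ∀ ζ ∈ (Finset.univ : Finset (Fin q)),
        Christoffel C.M C.Minv (Fin.castAdd q d) (Fin.natAdd p β) (Fin.natAdd p ζ) z *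
          Christoffel C.M C.Minv (Fin.natAdd p ζ) (Fin.castAdd q b) (Fin.natAdd p α) z =
        (if ζ = α then 1 else 0) *
          (-(1 / 2) * C.Dv (bpt z) d * C.gtil (fpt z) β ζ *
            (pd C.f b (bpt z) / (2 * C.f (bpt z)))) := by
      intro ζ _
      rw [C.Gamma_cnn hz, C.Gamma_ncn hz]
      ring
    rw [Finset.sum_congr rfl e1, Finset.sum_congr rfl e2, Finset.sum_congr rfl e3,
      Finset.sum_congr rfl e4, ← Finset.sum_mul]
    simp only [ite_mul, one_mul, zero_mul, Finset.sum_ite_eq', Finset.mem_univ, if_true,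
      Finset.sum_const_zero]
    field_simp
    ring
  rw [Finset.sum_congr rfl hstep, ← Finset.sum_mul, hgs β α]
  rfl

/-- The scalar `μ` with `S_{αβ} = S̃_{αβ} + μ g̃_{αβ}`. -/
def muF (z : Fin (p + q) → ℝ) : ℝ :=
  (∑ a, ∑ b, C.gbinv (bpt z) a b * C.Eten (bpt z) a b) -
    C.Sc (bpt z) * ((∑ ε, ∑ ζ, C.gtinv (fpt z) ε ζ * C.gtil (fpt z) ε ζ) - 1)

lemma Ric_nn (hz : z ∈ Mset C.U C.V) (α β : Fin q) :
    Ric C.M C.Minv z (Fin.natAdd p α) (Fin.natAdd p β) =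
      Ric C.gtil C.gtinv (fpt z) α β + C.muF z * C.gtil (fpt z) α β := by
  have hfz := C.fne (C.mem_U hz)
  have hgs := C.hgts (fpt z) (C.mem_V hz)
  unfold Ric
  rw [Fin.sum_univ_add]
  have hbase : ∀ a ∈ (Finset.univ : Finset (Fin p)),
      (∑ s, C.Minv z (Fin.castAdd q a) s *
        Riem C.M C.Minv z (Fin.castAdd q a) (Fin.natAdd p α) s (Fin.natAdd p β)) =
      ∑ b, C.gbinv (bpt z) a b * C.Eten (bpt z) a b * C.gtil (fpt z) α β := by
    intro a _
    rw [Fin.sum_univ_add]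
    simp only [C.Minv_cn, zero_mul, Finset.sum_const_zero, add_zero]
    refine Finset.sum_congr rfl fun b _ => ?_
    rw [C.Minv_cc, C.Riem_cncn hz]
    ring
  have hfib : ∀ ε ∈ (Finset.univ : Finset (Fin q)),
      (∑ s, C.Minv z (Fin.natAdd p ε) s *
        Riem C.M C.Minv z (Fin.natAdd p ε) (Fin.natAdd p α) s (Fin.natAdd p β)) =
      ∑ ζ, (C.gtinv (fpt z) ε ζ * Riem C.gtil C.gtinv (fpt z) ε α ζ β -
        C.Sc (bpt z) * (C.gtinv (fpt z) ε ζ * C.gtil (fpt z) ε ζ) * C.gtil (fpt z) α β +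
        C.Sc (bpt z) * C.gtil (fpt z) ε β * (C.gtinv (fpt z) ε ζ * C.gtil (fpt z) ζ α)) := by
    intro ε _
    rw [Fin.sum_univ_add]
    simp only [C.Minv_nc, zero_mul, Finset.sum_const_zero, zero_add]
    refine Finset.sum_congr rfl fun ζ _ => ?_
    rw [C.Minv_nn, C.Riem_nnnn hz]
    rw [hgs α ζ]
    field_simp
    ring
  rw [Finset.sum_congr rfl hbase, Finset.sum_congr rfl hfib]
  have hcol : ∀ ε ∈ (Finset.univ : Finset (Fin q)),
      (∑ ζ, (C.gtinv (fpt z) ε ζ * Riem C.gtil C.gtinv (fpt z) ε α ζ β -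
        C.Sc (bpt z) * (C.gtinv (fpt z) ε ζ * C.gtil (fpt z) ε ζ) * C.gtil (fpt z) α β +
        C.Sc (bpt z) * C.gtil (fpt z) ε β * (C.gtinv (fpt z) ε ζ * C.gtil (fpt z) ζ α))) =
      (∑ ζ, C.gtinv (fpt z) ε ζ * Riem C.gtil C.gtinv (fpt z) ε α ζ β) -
        C.Sc (bpt z) * (∑ ζ, C.gtinv (fpt z) ε ζ * C.gtil (fpt z) ε ζ) * C.gtil (fpt z) α β +
        C.Sc (bpt z) * C.gtil (fpt z) ε β * (if ε = α then 1 else 0) := by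
    intro ε _
    rw [Finset.sum_add_distrib, Finset.sum_sub_distrib, ← Finset.mul_sum,
      C.gtinv_gtil (fpt z) (C.mem_V hz) ε α]
    rw [show (∑ ζ, C.Sc (bpt z) * (C.gtinv (fpt z) ε ζ * C.gtil (fpt z) ε ζ) *
        C.gtil (fpt z) α β) = C.Sc (bpt z) * (∑ ζ, C.gtinv (fpt z) ε ζ * C.gtil (fpt z) ε ζ) *
        C.gtil (fpt z) α β from sum_scaled _ _ _]
  rw [Finset.sum_congr rfl hcol]
  rw [Finset.sum_add_distrib, Finset.sum_sub_distrib]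
  simp only [mul_ite, mul_one, mul_zero, Finset.sum_ite_eq', Finset.mem_univ, if_true]
  have hAB : (∑ x, ∑ b, C.gbinv (bpt z) x b * C.Eten (bpt z) x b * C.gtil (fpt z) α β) =
      (∑ x, ∑ b, C.gbinv (bpt z) x b * C.Eten (bpt z) x b) * C.gtil (fpt z) α β := by
    rw [Finset.sum_mul]
    exact Finset.sum_congr rfl fun x _ => (Finset.sum_mul _ _ _).symm
  rw [hAB, sum_scaled]
  unfold muF
  ring
end WCtx
/-! ### The covariant derivative of the curvature in a base direction -/

namespace WCtx

variable {p q : ℕ} (C : WCtx p q) {z : Fin (p + q) → ℝ}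

lemma cov4_fiber (hz : z ∈ Mset C.U C.V) (e : Fin p) (α β γ δ : Fin q) :
    cov4 C.M C.Minv (Riem C.M C.Minv) z
        (Fin.natAdd p α) (Fin.natAdd p β) (Fin.natAdd p γ) (Fin.natAdd p δ) (Fin.castAdd q e) =
      -pd C.f e (bpt z) * Riem C.gtil C.gtinv (fpt z) α β γ δ +
        (2 * pd C.f e (bpt z) * C.Sc (bpt z) - pd (fun x => C.f x * C.Sc x) e (bpt z)) *
          (C.gtil (fpt z) α γ * C.gtil (fpt z) β δ - C.gtil (fpt z) α δ * C.gtil (fpt z) β γ) := by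
  have hfz := C.fne (C.mem_U hz)
  unfold cov4
  have hc : ∀ ν : Fin q, ∀ G : Fin (p + q) → ℝ,
      (∑ r, Christoffel C.M C.Minv r (Fin.castAdd q e) (Fin.natAdd p ν) z * G r) =
        pd C.f e (bpt z) / (2 * C.f (bpt z)) * G (Fin.natAdd p ν) := by
    intro ν G
    rw [Fin.sum_univ_add]
    have h1 : ∀ d ∈ (Finset.univ : Finset (Fin p)),
        Christoffel C.M C.Minv (Fin.castAdd q d) (Fin.castAdd q e) (Fin.natAdd p ν) z *
          G (Fin.castAdd q d) = 0 := by
      intro d _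
      rw [C.Gamma_ccn hz]
      ring
    have h2 : ∀ ε ∈ (Finset.univ : Finset (Fin q)),
        Christoffel C.M C.Minv (Fin.natAdd p ε) (Fin.castAdd q e) (Fin.natAdd p ν) z *
          G (Fin.natAdd p ε) =
        (if ε = ν then 1 else 0) *
          (pd C.f e (bpt z) / (2 * C.f (bpt z)) * G (Fin.natAdd p ε)) := by
      intro ε _
      rw [C.Gamma_ncn hz]
      ring
    rw [Finset.sum_congr rfl h1, Finset.sum_congr rfl h2, Finset.sum_const_zero, zero_add]
    simp only [ite_mul, one_mul, zero_mul, Finset.sum_ite_eq', Finset.mem_univ, if_true]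
  rw [hc α (fun r => Riem C.M C.Minv z r (Fin.natAdd p β) (Fin.natAdd p γ) (Fin.natAdd p δ)),
    hc β (fun r => Riem C.M C.Minv z (Fin.natAdd p α) r (Fin.natAdd p γ) (Fin.natAdd p δ)),
    hc γ (fun r => Riem C.M C.Minv z (Fin.natAdd p α) (Fin.natAdd p β) r (Fin.natAdd p δ)),
    hc δ (fun r => Riem C.M C.Minv z (Fin.natAdd p α) (Fin.natAdd p β) (Fin.natAdd p γ) r)]
  have hpd : pd (fun y => Riem C.M C.Minv y
      (Fin.natAdd p α) (Fin.natAdd p β) (Fin.natAdd p γ) (Fin.natAdd p δ)) (Fin.castAdd q e) z =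
      pd C.f e (bpt z) * Riem C.gtil C.gtinv (fpt z) α β γ δ -
        pd (fun x => C.f x * C.Sc x) e (bpt z) *
          (C.gtil (fpt z) α γ * C.gtil (fpt z) β δ -
            C.gtil (fpt z) α δ * C.gtil (fpt z) β γ) := by
    have hB1 : DifferentiableAt ℝ (fun w => Riem C.gtil C.gtinv w α β γ δ) (fpt z) :=
      C.diff_RiemT α β γ δ (C.mem_V hz)
    have hB2 : DifferentiableAt ℝ (fun w => C.gtil w α γ * C.gtil w β δ -
        C.gtil w α δ * C.gtil w β γ) (fpt z) := by
      exact ((C.diff_gt α γ (C.mem_V hz)).mul (C.diff_gt β δ (C.mem_V hz))).sub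
        ((C.diff_gt α δ (C.mem_V hz)).mul (C.diff_gt β γ (C.mem_V hz)))
    have hA2 : DifferentiableAt ℝ (fun x => -(C.f x * C.Sc x)) (bpt z) :=
      (diffAt_of_contDiffOn C.hU C.hfSc (C.mem_U hz)).neg
    have heq : (fun y => Riem C.M C.Minv y
        (Fin.natAdd p α) (Fin.natAdd p β) (Fin.natAdd p γ) (Fin.natAdd p δ)) =ᶠ[𝓝 z]
        (fun y => C.f (bpt y) * (fun w => Riem C.gtil C.gtinv w α β γ δ) (fpt y) +
          (fun x => -(C.f x * C.Sc x)) (bpt y) *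
            (fun w => C.gtil w α γ * C.gtil w β δ - C.gtil w α δ * C.gtil w β γ) (fpt y)) := by
      refine eventuallyEq_of_open C.openM hz fun y hy => ?_
      rw [C.Riem_nnnn hy]
      ring
    rw [pd_congr_nhds heq]
    rw [pd_add ((diffAt_comp_bpt (C.diff_f (C.mem_U hz))).fun_mul (diffAt_comp_fpt hB1))
      ((diffAt_comp_bpt hA2).fun_mul (diffAt_comp_fpt hB2))]
    rw [pd_prod_bf (C.diff_f (C.mem_U hz)) hB1, pd_prod_bf hA2 hB2]
    rw [show pd (fun x => -(C.f x * C.Sc x)) e (bpt z) =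
        -pd (fun x => C.f x * C.Sc x) e (bpt z) from pd_neg e]
    ring
  rw [hpd, C.Riem_nnnn hz]
  field_simp
  ring

end WCtx
/-- Corollary 4.1(iv): the fiber of a warped product SGK manifold is of Roter type
wherever df + f Π̄ is nonzero. -/
theorem fiber_of_warped_SGK_is_RT
    {p q : ℕ} (hp : 1 ≤ p) (hq : 1 ≤ q)
    (U : Set (Fin p → ℝ)) (V : Set (Fin q → ℝ))
    (hU : IsOpen U) (hV : IsOpen V)
    (gbar gbinv : (Fin p → ℝ) → Fin p → Fin p → ℝ)
    (gtil gtinv : (Fin q → ℝ) → Fin q → Fin q → ℝ)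
    (f : (Fin p → ℝ) → ℝ)
    (hgb : ∀ a b, ContDiffOn ℝ (⊤ : ℕ∞) (fun x => gbar x a b) U)
    (hgbs : ∀ x ∈ U, ∀ a b, gbar x a b = gbar x b a)
    (hgbi : ∀ x ∈ U, ∀ a b, (∑ c, gbar x a c * gbinv x c b) = if a = b then (1 : ℝ) else 0)
    (hgt : ∀ a b, ContDiffOn ℝ (⊤ : ℕ∞) (fun y => gtil y a b) V)
    (hgts : ∀ y ∈ V, ∀ a b, gtil y a b = gtil y b a)
    (hgti : ∀ y ∈ V, ∀ a b, (∑ c, gtil y a c * gtinv y c b) = if a = b then (1 : ℝ) else 0)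
    (hf : ContDiffOn ℝ (⊤ : ℕ∞) f U)
    (hfpos : ∀ x ∈ U, 0 < f x)
    (piF phiF psiF thetaF : (Fin (p + q) → ℝ) → Fin (p + q) → ℝ)
    (hpiF : ∀ m, ContDiffOn ℝ (⊤ : ℕ∞) (fun z => piF z m) (Mset U V))
    (hphiF : ∀ m, ContDiffOn ℝ (⊤ : ℕ∞) (fun z => phiF z m) (Mset U V))
    (hpsiF : ∀ m, ContDiffOn ℝ (⊤ : ℕ∞) (fun z => psiF z m) (Mset U V))
    (hthetaF : ∀ m, ContDiffOn ℝ (⊤ : ℕ∞) (fun z => thetaF z m) (Mset U V))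
    (hsgk : ∀ z ∈ Mset U V, SGK (wMet gbar gtil f) (wMetInv gbinv gtinv f) piF phiF psiF thetaF z) :
    ∀ z ∈ Mset U V, (∃ e : Fin p, pd f e (bpt z) + f (bpt z) * piF z (Fin.castAdd q e) ≠ 0) →
      ∃ N₁ N₂ N₃ : ℝ, ∀ α β γ δ : Fin q,
        Riem gtil gtinv (fpt z) α β γ δ =
          N₁ * KN gtil gtil (fpt z) α β γ δ - N₂ * KN gtil (Ric gtil gtinv) (fpt z) α β γ δ - N₃ * KN (Ric gtil gtinv) (Ric gtil gtinv) (fpt z) α β γ δ := by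
  intro z hz hex
  obtain ⟨e, he⟩ := hex
  classical
  let C : WCtx p q :=
    ⟨U, V, hU, hV, gbar, gbinv, gtil, gtinv, f, hgb, hgbs, hgbi, hgt, hgts, hgti, hf, hfpos⟩
  have hzM : z ∈ Mset C.U C.V := hz
  have hM : wMet gbar gtil f = C.M := rfl
  have hMinv : wMetInv gbinv gtinv f = C.Minv := rfl
  set lam := pd f e (bpt z) + f (bpt z) * piF z (Fin.castAdd q e) with hlam
  have hlamne : lam ≠ 0 := he
  set F := f (bpt z) with hF
  set pdf := pd f e (bpt z) with hpdf
  set Sc := C.Sc (bpt z) with hSc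
  set W := pd (fun x => C.f x * C.Sc x) e (bpt z) with hW
  set mu := C.muF z with hmu
  set pe := piF z (Fin.castAdd q e) with hpe
  set fe := phiF z (Fin.castAdd q e) with hfe
  set se := psiF z (Fin.castAdd q e) with hse
  set te := thetaF z (Fin.castAdd q e) with hte
  refine ⟨-((2 * pdf * Sc - W) / 2 + pe * F * Sc / 2 + fe * mu ^ 2 + se * F * mu + te * F ^ 2) /
      lam, (2 * mu * fe + F * se) / lam, fe / lam, fun α β γ δ => ?_⟩
  have E := hsgk z hz (Fin.natAdd p α) (Fin.natAdd p β) (Fin.natAdd p γ) (Fin.natAdd p δ)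
    (Fin.castAdd q e)
  rw [hM, hMinv] at E
  rw [C.cov4_fiber hzM e α β γ δ] at E
  rw [C.Riem_nnnn hzM] at E
  simp only [KN] at E
  simp only [C.Ric_nn hzM, C.M_nn] at E
  have key : lam * Riem gtil gtinv (fpt z) α β γ δ =
      (-((2 * pdf * Sc - W) / 2 + pe * F * Sc / 2 + fe * mu ^ 2 + se * F * mu + te * F ^ 2)) *
        KN gtil gtil (fpt z) α β γ δ -
      (2 * mu * fe + F * se) * KN gtil (Ric gtil gtinv) (fpt z) α β γ δ -
      fe * KN (Ric gtil gtinv) (Ric gtil gtinv) (fpt z) α β γ δ := by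
    simp only [KN]
    linear_combination -E
  have goal2 : Riem gtil gtinv (fpt z) α β γ δ =
      (lam * Riem gtil gtinv (fpt z) α β γ δ) / lam := by
    field_simp
  rw [goal2, key]
  field_simp
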